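/- Let H, N, Ω be real n×n matrices with H symmetric, N diagonal, Ω skew-symmetric, and suppose ad_Ω H = [Ω,H] ≠ 0 and ad_Ω N = [Ω,N] ≠ 0. Define φ(t) = tr( e^{-Ωt} H e^{Ωt} N ). If φ'(0) > 0, then φ'(t) ≥ 0 for all t in [0, 2 tr(HΩN) / (‖[Ω,H]‖ ‖[Ω,N]‖)], where ‖·‖ is the Frobenius norm. -/

import Mathlib

open Matrix

noncomputable def frobNorm {n : ℕ} (A : Matrix (Fin n) (Fin n) ℝ) : ℝ :=
  Real.sqrt (∑ i, ∑ j, A i j ^ 2)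

namespace BrockettAux

variable {n : ℕ}

lemma frobNorm_pos {A : Matrix (Fin n) (Fin n) ℝ} (hA : A ≠ 0) : 0 < frobNorm A := by
  apply Real.sqrt_pos.mpr
  obtain ⟨i, j, hij⟩ : ∃ i j, A i j ≠ 0 := by
    by_contra h
    push_neg at h
    exact hA (by ext i j; simp [h])
  calc (0:ℝ) < A i j ^ 2 := by positivity
    _ ≤ ∑ j', A i j' ^ 2 :=
      Finset.single_le_sum (f := fun j' => A i j' ^ 2) (fun _ _ => sq_nonneg _)
        (Finset.mem_univ j)
    _ ≤ ∑ i', ∑ j', A i' j' ^ 2 :=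
      Finset.single_le_sum (f := fun i' => ∑ j', A i' j' ^ 2)
        (fun _ _ => Finset.sum_nonneg fun _ _ => sq_nonneg _) (Finset.mem_univ i)

lemma frobNorm_neg (A : Matrix (Fin n) (Fin n) ℝ) : frobNorm (-A) = frobNorm A := by
  simp [frobNorm]

lemma sum_sq_eq_trace (A : Matrix (Fin n) (Fin n) ℝ) :
    (∑ i, ∑ j, A i j ^ 2) = (A * Aᵀ).trace := by
  simp [Matrix.trace, Matrix.mul_apply, Matrix.diag, sq]

lemma trace_mul_le (C D : Matrix (Fin n) (Fin n) ℝ) :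
    (C * D).trace ≤ frobNorm C * frobNorm D := by
  have h : (C * D).trace = ∑ p : Fin n × Fin n, C p.1 p.2 * D p.2 p.1 := by
    rw [Fintype.sum_prod_type]
    simp [Matrix.trace, Matrix.mul_apply, Matrix.diag]
  rw [h, frobNorm, frobNorm]
  have hcs := Real.sum_mul_le_sqrt_mul_sqrt Finset.univ
    (fun p : Fin n × Fin n => C p.1 p.2) (fun p : Fin n × Fin n => D p.2 p.1)
  refine hcs.trans_eq ?_
  congr 1
  · congr 1
    rw [Fintype.sum_prod_type]
  · congr 1
    rw [Fintype.sum_prod_type]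
    exact Finset.sum_comm

lemma abs_trace_mul_le (C D : Matrix (Fin n) (Fin n) ℝ) :
    |(C * D).trace| ≤ frobNorm C * frobNorm D := by
  rw [abs_le]
  constructor
  · have := trace_mul_le C (-D)
    rw [Matrix.mul_neg, Matrix.trace_neg, frobNorm_neg] at this
    linarith
  · exact trace_mul_le C D

section calculus

attribute [local instance] Matrix.linftyOpNormedAddCommGroup Matrix.linftyOpNormedRing
  Matrix.linftyOpNormedAlgebra

noncomputable local instance : CompleteSpace (Matrix (Fin n) (Fin n) ℝ) :=
  FiniteDimensional.complete ℝ _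

variable (Ω N : Matrix (Fin n) (Fin n) ℝ)

lemma exp_mul_exp_neg (t : ℝ) :
    NormedSpace.exp (t • Ω) * NormedSpace.exp ((-t) • Ω) = 1 := by
  erw [← NormedSpace.exp_add_of_commute (((Commute.refl Ω).smul_left t).smul_right (-t))]
  rw [← add_smul, add_neg_cancel, zero_smul, NormedSpace.exp_zero]

lemma comm_exp (t : ℝ) :
    Ω * NormedSpace.exp (t • Ω) = NormedSpace.exp (t • Ω) * Ω :=
  (((Commute.refl Ω).smul_right t).exp_right).eq

lemma hasDerivAt_conjTrace (B : Matrix (Fin n) (Fin n) ℝ) (t : ℝ) :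
    HasDerivAt
      (fun u : ℝ =>
        (NormedSpace.exp ((-u) • Ω) * B * NormedSpace.exp (u • Ω) * N).trace)
      ((NormedSpace.exp ((-t) • Ω) * (B * Ω - Ω * B) *
        NormedSpace.exp (t • Ω) * N).trace) t := by
  have h1 : HasDerivAt (fun u : ℝ => NormedSpace.exp ((-u) • Ω))
      ((-1 : ℝ) • (Ω * NormedSpace.exp ((-t) • Ω))) t :=
    HasDerivAt.scomp (x := t) (hasDerivAt_exp_smul_const' Ω (-t)) (hasDerivAt_neg t)
  have h2 : HasDerivAt (fun u : ℝ => NormedSpace.exp (u • Ω))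
      (NormedSpace.exp (t • Ω) * Ω) t := hasDerivAt_exp_smul_const Ω t
  have h3 := ((h1.mul_const B).mul h2).mul_const N
  have hD : ((-1 : ℝ) • (Ω * NormedSpace.exp ((-t) • Ω)) * B * NormedSpace.exp (t • Ω) +
        NormedSpace.exp ((-t) • Ω) * B * (NormedSpace.exp (t • Ω) * Ω)) * N =
      NormedSpace.exp ((-t) • Ω) * (B * Ω - Ω * B) * NormedSpace.exp (t • Ω) * N := by
    simp only [neg_one_smul]
    rw [comm_exp Ω (-t), ← comm_exp Ω t]
    noncomm_ring
  rw [← hD]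
  let T : Matrix (Fin n) (Fin n) ℝ →L[ℝ] ℝ :=
    LinearMap.toContinuousLinearMap (Matrix.traceLinearMap (Fin n) ℝ ℝ)
  have h4 := T.hasFDerivAt.comp_hasDerivAt t h3
  exact h4

lemma trace_conj_cycle (A : Matrix (Fin n) (Fin n) ℝ) (t : ℝ) :
    (NormedSpace.exp ((-t) • Ω) * (A * Ω - Ω * A) * NormedSpace.exp (t • Ω) * N).trace =
      ((NormedSpace.exp ((-t) • Ω) * A * NormedSpace.exp (t • Ω)) *
        (Ω * N - N * Ω)).trace := by
  set Ep := NormedSpace.exp (t • Ω)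
  set Em := NormedSpace.exp ((-t) • Ω)
  have hc : Ω * Ep = Ep * Ω := comm_exp Ω t
  have hc' : Ω * Em = Em * Ω := comm_exp Ω (-t)
  have swap1 : ∀ X : Matrix (Fin n) (Fin n) ℝ, Ω * (Ep * X) = Ep * (Ω * X) := fun X => by
    rw [← Matrix.mul_assoc, hc, Matrix.mul_assoc]
  have swap2 : ∀ X : Matrix (Fin n) (Fin n) ℝ, Em * (Ω * X) = Ω * (Em * X) := fun X => by
    rw [← Matrix.mul_assoc, ← hc', Matrix.mul_assoc]
  have key : Em * (A * Ω - Ω * A) * Ep * N =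
      (Em * A * Ep) * (Ω * N) - Ω * ((Em * A * Ep) * N) := by
    simp only [Matrix.mul_sub, Matrix.sub_mul, Matrix.mul_assoc, swap1, swap2]
  rw [key, Matrix.trace_sub, Matrix.mul_sub, Matrix.trace_sub,
    Matrix.trace_mul_comm Ω ((Em * A * Ep) * N), Matrix.mul_assoc (Em * A * Ep) N Ω]

lemma frobNorm_conj (hΩ : Ωᵀ = -Ω) (A : Matrix (Fin n) (Fin n) ℝ) (t : ℝ) :
    frobNorm (NormedSpace.exp ((-t) • Ω) * A * NormedSpace.exp (t • Ω)) = frobNorm A := by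
  set Ep := NormedSpace.exp (t • Ω) with hEp
  set Em := NormedSpace.exp ((-t) • Ω) with hEm
  have htr : Epᵀ = Em := by
    rw [hEp, hEm, ← Matrix.exp_transpose, Matrix.transpose_smul, hΩ, smul_neg, neg_smul,
      ← neg_smul]
  have htr' : Emᵀ = Ep := by
    rw [hEp, hEm, ← Matrix.exp_transpose, Matrix.transpose_smul, hΩ, smul_neg, ← neg_smul,
      neg_neg]
  have hEE : Ep * Em = 1 := exp_mul_exp_neg Ω t
  unfold frobNorm
  congr 1
  rw [sum_sq_eq_trace, sum_sq_eq_trace]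
  have hCt : (Em * A * Ep)ᵀ = Em * Aᵀ * Ep := by
    rw [Matrix.transpose_mul, Matrix.transpose_mul, htr, htr', ← Matrix.mul_assoc]
  rw [hCt]
  have : Em * A * Ep * (Em * Aᵀ * Ep) = Em * (A * Aᵀ) * Ep := by
    have h1 : ∀ X : Matrix (Fin n) (Fin n) ℝ, Ep * (Em * X) = X := fun X => by
      rw [← Matrix.mul_assoc, hEE, Matrix.one_mul]
    simp only [Matrix.mul_assoc, h1]
  rw [this, Matrix.trace_mul_cycle, ← Matrix.mul_assoc, hEE, Matrix.one_mul]

end calculus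

end BrockettAux

open BrockettAux in
theorem brockett_step_size_estimate (n : ℕ)
    (H N Ω : Matrix (Fin n) (Fin n) ℝ)
    (hH : H.IsSymm) (hN : N.IsDiag) (hΩ : Ωᵀ = -Ω)
    (hadH : Ω * H - H * Ω ≠ 0) (hadN : Ω * N - N * Ω ≠ 0)
    (φ : ℝ → ℝ)
    (hφ : ∀ t, φ t = (NormedSpace.exp (-(t • Ω)) * H * NormedSpace.exp (t • Ω) * N).trace)
    (hφ'0 : 0 < deriv φ 0) :
    ∀ t ∈ Set.Icc (0 : ℝ)
        (2 * (H * Ω * N).trace / (frobNorm (Ω * H - H * Ω) * frobNorm (Ω * N - N * Ω))),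
      0 ≤ deriv φ t := by
  have hφ' : φ = fun u : ℝ =>
      (NormedSpace.exp ((-u) • Ω) * H * NormedSpace.exp (u • Ω) * N).trace := by
    funext u
    rw [hφ, neg_smul]
  set L : ℝ := frobNorm (Ω * H - H * Ω) * frobNorm (Ω * N - N * Ω) with hL
  have hLpos : 0 < L := mul_pos (frobNorm_pos hadH) (frobNorm_pos hadN)
  set ψ : ℝ → ℝ := fun t =>
    (NormedSpace.exp ((-t) • Ω) * (H * Ω - Ω * H) *
      NormedSpace.exp (t • Ω) * N).trace with hψdef
  have hφψ : ∀ t, HasDerivAt φ (ψ t) t := by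
    intro t
    rw [hφ']
    exact hasDerivAt_conjTrace Ω N H t
  set χ : ℝ → ℝ := fun t =>
    (NormedSpace.exp ((-t) • Ω) * ((H * Ω - Ω * H) * Ω - Ω * (H * Ω - Ω * H)) *
      NormedSpace.exp (t • Ω) * N).trace with hχdef
  have hψχ : ∀ t, HasDerivAt ψ (χ t) t := fun t => hasDerivAt_conjTrace Ω N (H * Ω - Ω * H) t
  have hbound : ∀ t, |χ t| ≤ L := by
    intro t
    have h1 : χ t =
        ((NormedSpace.exp ((-t) • Ω) * (H * Ω - Ω * H) * NormedSpace.exp (t • Ω)) *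
          (Ω * N - N * Ω)).trace := trace_conj_cycle Ω N (H * Ω - Ω * H) t
    rw [h1]
    have h2 := abs_trace_mul_le
      (NormedSpace.exp ((-t) • Ω) * (H * Ω - Ω * H) * NormedSpace.exp (t • Ω))
      (Ω * N - N * Ω)
    rw [frobNorm_conj Ω hΩ (H * Ω - Ω * H) t] at h2
    have h3 : frobNorm (H * Ω - Ω * H) = frobNorm (Ω * H - H * Ω) := by
      rw [← neg_sub, frobNorm_neg]
    rw [h3] at h2
    exact h2
  -- value of ψ at 0
  have hψ0 : ψ 0 = 2 * (H * Ω * N).trace := by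
    have e0 : NormedSpace.exp ((0:ℝ) • Ω) = 1 := by
      rw [zero_smul, NormedSpace.exp_zero]
    have e0' : NormedSpace.exp ((-(0:ℝ)) • Ω) = 1 := by
      rw [neg_zero, zero_smul, NormedSpace.exp_zero]
    rw [hψdef]
    simp only [e0, e0', Matrix.one_mul, Matrix.mul_one]
    rw [Matrix.sub_mul, Matrix.trace_sub]
    have htr : (Ω * H * N).trace = -(H * Ω * N).trace := by
      conv_lhs => rw [← Matrix.trace_transpose]
      rw [Matrix.transpose_mul, Matrix.transpose_mul, hN.isSymm.eq, hH.eq, hΩ]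
      rw [Matrix.mul_neg, Matrix.mul_neg, Matrix.trace_neg, ← Matrix.mul_assoc,
        ← Matrix.trace_mul_cycle H Ω N]
    rw [htr]
    ring
  -- monotonicity of ψ + L t
  have hg : ∀ t : ℝ, HasDerivAt (fun u => ψ u + L * u) (χ t + L) t := by
    intro t
    exact (hψχ t).add (by simpa using (hasDerivAt_id t).const_mul L)
  have hmono : Monotone (fun u => ψ u + L * u) := by
    apply monotone_of_deriv_nonneg
    · exact fun t => (hg t).differentiableAt
    · intro t
      rw [(hg t).deriv]
      have := hbound t
      have := neg_abs_le (χ t)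
      linarith [abs_le.mp (hbound t) |>.1]
  intro t ht
  obtain ⟨ht0, htb⟩ := ht
  have hmt := hmono ht0
  simp only [mul_zero, add_zero] at hmt
  have hLt : L * t ≤ 2 * (H * Ω * N).trace := by
    have := mul_le_mul_of_nonneg_left htb (le_of_lt hLpos)
    rwa [mul_div_cancel₀ _ (ne_of_gt hLpos)] at this
  have : 0 ≤ ψ t := by
    have : ψ 0 ≤ ψ t + L * t := hmt
    rw [hψ0] at this
    linarith
  rw [(hφψ t).deriv]
  exact this
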